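/- Let n ≥ 4, β ≥ 1, L > 0. Define f_{β,L}(x) = βx^{2β} for x ≤ L and f_{β,L}(x) = nβ²L^{2β−1}x for x > L. Then x·G_{β,L}(x) − (n/2)·H_{β,L}(x) ≤ f_{β,L}(x) for all x ≥ 0. -/

import Mathlib

/-- `G_{β,L}(x)`: power for `x ≤ L`, linear beyond. -/
noncomputable def Gfun (β L x : ℝ) : ℝ :=
  if x ≤ L then β^2/(2*β-1) * x ^ (2*β-1)
  else β^2 * L ^ (2*(β-1)) * x - 2*β^2 * L ^ (2*β-1) * (β-1)/(2*β-1)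

/-- `H_{β,L}(x) = ∫₀ˣ G_{β,L}(y) dy`. -/
noncomputable def Hfun (β L x : ℝ) : ℝ := ∫ y in (0:ℝ)..x, Gfun β L y

/-- The comparison function, linear for large `x`. -/
noncomputable def ffun (n : ℕ) (β L x : ℝ) : ℝ :=
  if x ≤ L then β * x ^ (2*β) else (n:ℝ) * β^2 * L ^ (2*β-1) * x

lemma mul_self_rpow (β x : ℝ) (hβ : 1 ≤ β) (hx : 0 ≤ x) :
    x * x ^ (2*β-1) = x ^ (2*β) := by
  rcases eq_or_lt_of_le hx with h | h
  · rw [← h, Real.zero_rpow (by nlinarith), Real.zero_rpow (by nlinarith), mul_zero]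
  · rw [Real.rpow_sub h, Real.rpow_one]
    field_simp

lemma Hfun_eq_of_le (β L x : ℝ) (hβ : 1 ≤ β) (hL : 0 < L) (hx : 0 ≤ x) (hxL : x ≤ L) :
    Hfun β L x = β^2/(2*β-1) * x ^ (2*β) / (2*β) := by
  have hβ0 : (0:ℝ) < 2*β := by linarith
  rw [Hfun, intervalIntegral.integral_congr
      (g := fun y => β^2/(2*β-1) * y ^ (2*β-1)) ?_]
  · rw [intervalIntegral.integral_const_mul, integral_rpow (Or.inl (by linarith)),
      show (2*β-1+1 : ℝ) = 2*β by ring, Real.zero_rpow (ne_of_gt hβ0)]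
    ring
  · intro y hy
    rw [Set.uIcc_of_le hx] at hy
    exact if_pos (le_trans hy.2 hxL)

lemma Gfun_continuous (β L : ℝ) (hβ : 1 ≤ β) (hL : 0 < L) :
    Continuous (Gfun β L) := by
  have hs0 : (0:ℝ) < 2*β-1 := by linarith
  apply Continuous.if_le
  · exact continuous_const.mul (Real.continuous_rpow_const (by linarith))
  · exact (continuous_const.mul continuous_id).sub continuous_const
  · exact continuous_id
  · exact continuous_const
  · intro y hy
    rw [hy]
    have h1 : L ^ (2*(β-1)) * L = L ^ (2*β-1) := by
      rw [show (2*β-1 : ℝ) = 2*(β-1) + 1 by ring, Real.rpow_add hL, Real.rpow_one]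
    rw [show β^2 * L ^ (2*(β-1)) * L = β^2 * (L ^ (2*(β-1)) * L) by ring, h1]
    rw [eq_sub_iff_add_eq, div_mul_eq_mul_div, ← add_div, div_eq_iff hs0.ne']
    ring

lemma Hfun_eq_of_gt (β L x : ℝ) (hβ : 1 ≤ β) (hL : 0 < L) (hxL : L < x) :
    Hfun β L x = β^2/(2*β-1) * L ^ (2*β) / (2*β)
      + (β^2 * L ^ (2*(β-1)) * ((x^2 - L^2)/2)
        - 2*β^2 * L ^ (2*β-1) * (β-1)/(2*β-1) * (x - L)) := by
  have hc := Gfun_continuous β L hβ hL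
  have hsplit : Hfun β L x = Hfun β L L + ∫ y in L..x, Gfun β L y := by
    rw [Hfun, Hfun, intervalIntegral.integral_add_adjacent_intervals
      (hc.intervalIntegrable 0 L) (hc.intervalIntegrable L x)]
  rw [hsplit, Hfun_eq_of_le β L L hβ hL hL.le le_rfl]
  congr 1
  have heq : ∫ y in L..x, Gfun β L y
      = ∫ y in L..x, (β^2 * L ^ (2*(β-1)) * y - 2*β^2 * L ^ (2*β-1) * (β-1)/(2*β-1)) := by
    apply intervalIntegral.integral_congr_ae
    filter_upwards with y hy
    rw [Set.uIoc_of_le hxL.le] at hy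
    exact if_neg (not_le.mpr hy.1)
  rw [heq, intervalIntegral.integral_sub
      ((intervalIntegral.intervalIntegrable_id).const_mul _)
      (intervalIntegrable_const),
    intervalIntegral.integral_const_mul, integral_id, intervalIntegral.integral_const, smul_eq_mul]
  ring

theorem stmt6 (n : ℕ) (hn : 4 ≤ n) (β L : ℝ) (hβ : 1 ≤ β) (hL : 0 < L)
    (x : ℝ) (hx : 0 ≤ x) :
    x * Gfun β L x - (n/2 : ℝ) * Hfun β L x ≤ ffun n β L x := by
  have hs0 : (0:ℝ) < 2*β-1 := by linarith
  have hβ0 : (0:ℝ) < 2*β := by linarith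
  have hn4 : (4:ℝ) ≤ (n:ℝ) := by exact_mod_cast hn
  by_cases hxL : x ≤ L
  · rw [Gfun, if_pos hxL, ffun, if_pos hxL, Hfun_eq_of_le β L x hβ hL hx hxL]
    have hA : 0 ≤ x ^ (2*β) := Real.rpow_nonneg hx _
    have hxx : x * x ^ (2*β-1) = x ^ (2*β) := mul_self_rpow β x hβ hx
    calc x * (β^2/(2*β-1) * x ^ (2*β-1)) - (n:ℝ)/2 * (β^2/(2*β-1) * x ^ (2*β) / (2*β))
        = (β^2/(2*β-1) - (n:ℝ)/2 * (β^2/(2*β-1)/(2*β))) * x ^ (2*β) := by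
          rw [show x * (β^2/(2*β-1) * x ^ (2*β-1)) = β^2/(2*β-1) * (x * x ^ (2*β-1)) by ring,
            hxx]; ring
      _ ≤ β * x ^ (2*β) := by
          apply mul_le_mul_of_nonneg_right _ hA
          have e : β^2/(2*β-1) - (n:ℝ)/2 * (β^2/(2*β-1)/(2*β))
              = (β^2*(4*β - (n:ℝ)))/((2*β-1)*(4*β)) := by
            field_simp
            ring
          rw [e, div_le_iff₀ (by positivity)]
          nlinarith [mul_nonneg (sub_nonneg.mpr hβ) (sq_nonneg β),
            mul_nonneg (by linarith : (0:ℝ) ≤ (n:ℝ)) (sq_nonneg β)]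
  · push_neg at hxL
    rw [Gfun, if_neg (not_le.mpr hxL), ffun, if_neg (not_le.mpr hxL),
      Hfun_eq_of_gt β L x hβ hL hxL]
    set a := β^2 * L ^ (2*(β-1)) with ha
    set b := 2*β^2 * L ^ (2*β-1) * (β-1)/(2*β-1) with hb
    set c := β^2/(2*β-1) * L ^ (2*β) / (2*β) with hc
    have hP : (0:ℝ) < L ^ (2*β-1) := Real.rpow_pos_of_pos hL _
    have hP2 : (0:ℝ) < L ^ (2*(β-1)) := Real.rpow_pos_of_pos hL _
    have hPL : L ^ (2*(β-1)) * L = L ^ (2*β-1) := by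
      rw [show (2*β-1 : ℝ) = 2*(β-1) + 1 by ring, Real.rpow_add hL, Real.rpow_one]
    have ha0 : 0 < a := by positivity
    have haL : a * L = β^2 * L ^ (2*β-1) := by rw [ha, mul_assoc, hPL]
    have hb0 : 0 ≤ b := by
      rw [hb]
      apply div_nonneg _ hs0.le
      have : (0:ℝ) ≤ β - 1 := by linarith
      positivity
    have hbaL : b ≤ a * L := by
      rw [hb, haL, div_le_iff₀ hs0]
      nlinarith
    have hc0 : 0 ≤ c := by
      rw [hc]
      have := Real.rpow_nonneg hL.le (2*β)
      positivity
    -- key nonneg products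
    have F1 : 0 ≤ a * x * (x - L) * ((n:ℝ)/4 - 1) := by
      apply mul_nonneg (mul_nonneg (mul_nonneg ha0.le (hL.trans hxL).le) (by linarith))
      linarith
    have F2 : 0 ≤ (a * L - b) * x * ((n:ℝ)/2 - 1) := by
      apply mul_nonneg (mul_nonneg (by linarith) (hL.trans hxL).le)
      linarith
    have F3 : 0 ≤ (n:ℝ)/4 * (a * L) * (x - L) := by
      apply mul_nonneg (mul_nonneg (by linarith) (by positivity))
      linarith
    have F4 : 0 ≤ (n:ℝ)/2 * (a * L * x) := by
      apply mul_nonneg (by linarith)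
      have := (hL.trans hxL).le
      positivity
    have F5 : 0 ≤ (n:ℝ)/2 * (b * L) := by
      apply mul_nonneg (by linarith) (mul_nonneg hb0 hL.le)
    have F6 : 0 ≤ (n:ℝ)/2 * c := mul_nonneg (by linarith) hc0
    rw [show (n:ℝ) * β^2 * L ^ (2*β-1) * x = (n:ℝ) * (a * L) * x by rw [haL]; ring]
    nlinarith [F1, F2, F3, F4, F5, F6]
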